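/- With V = ℍⁿ, W = ℍ^{n−1} ⊕ Im ℍ and n ≥ 2, any element φ = (A,a) ∈ GL_n(ℍ)·Sp₁ preserving W and whose restriction to W is the identity must be the identity of V; equivalently, the subgroup N♯ of W-preserving elements acting trivially on W is trivial. -/

import Mathlib

open scoped Quaternion

/-- With `V = ℍ^{n+1}` (`n ≥ 1`, i.e. paper's `n ≥ 2`) and
`W = ℍⁿ ⊕ Im ℍ`, any `φ = (A, a)` (acting by `v ↦ A v a⁻¹`, `A` right-ℍ-linear,
`a` unit) which restricts to the identity on `W` is the identity of `V`;
i.e. the subgroup `N♯` is trivial. -/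
theorem trivial_stabilizer_acting_trivially
    (n : ℕ) (hn : 1 ≤ n)
    (A : (Fin (n + 1) → ℍ[ℝ]) ≃ₗ[ℝ] (Fin (n + 1) → ℍ[ℝ]))
    (hA : ∀ (v : Fin (n + 1) → ℍ[ℝ]) (c : ℍ[ℝ]),
      A (fun m => v m * c) = fun m => A v m * c)
    (a : ℍ[ℝ]) (ha : ‖a‖ = 1)
    (hId : ∀ v : Fin (n + 1) → ℍ[ℝ], (v (Fin.last n)).re = 0 →
      (fun m => A v m * a⁻¹) = v) :
    ∀ v : Fin (n + 1) → ℍ[ℝ], (fun m => A v m * a⁻¹) = v := by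
  have ha0 : a ≠ 0 := by
    intro h; rw [h, norm_zero] at ha; norm_num at ha
  have hainv : a⁻¹ ≠ 0 := inv_ne_zero ha0
  set e : Fin (n + 1) → ℍ[ℝ] := fun m => if m = Fin.last n then 1 else 0 with he
  have key : ∀ q : ℍ[ℝ], q.re = 0 → ∀ m, A e m * q * a⁻¹ = e m * q := by
    intro q hq m
    have h := hId (fun m => e m * q) (by simp [he, hq])
    rw [hA e q] at h
    exact congrFun h m
  set I : ℍ[ℝ] := ⟨0, 1, 0, 0⟩ with hI
  set J : ℍ[ℝ] := ⟨0, 0, 1, 0⟩ with hJ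
  set K : ℍ[ℝ] := ⟨0, 0, 0, 1⟩ with hK
  have hIne : I ≠ 0 := by
    intro h; have := congrArg QuaternionAlgebra.imI h; simp [hI] at this
  -- off-last entries vanish
  have hzero : ∀ m, m ≠ Fin.last n → A e m = 0 := by
    intro m hm
    have h := key I rfl m
    simp only [he, if_neg hm, zero_mul] at h
    rcases mul_eq_zero.1 h with h' | h'
    · rcases mul_eq_zero.1 h' with h'' | h''
      · exact h''
      · exact absurd h'' hIne
    · exact absurd h' hainv
  -- the last entry equals a
  have hlast : A e (Fin.last n) = a := by
    set b := A e (Fin.last n) with hb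
    have mul_a : ∀ q : ℍ[ℝ], b * q * a⁻¹ = q → b * q = q * a := by
      intro q h
      have := congrArg (· * a) h
      simpa [mul_assoc, inv_mul_cancel₀ ha0] using this
    have e1 : b * I = I * a := by
      have h := key I rfl (Fin.last n)
      simp only [he, if_pos rfl, one_mul] at h
      exact mul_a I h
    have e2 : b * J = J * a := by
      have h := key J rfl (Fin.last n)
      simp only [he, if_pos rfl, one_mul] at h
      exact mul_a J h
    have e3 : b * K = K * a := by
      have h := key K rfl (Fin.last n)
      simp only [he, if_pos rfl, one_mul] at h
      exact mul_a K h
    rw [Quaternion.ext_iff] at e1 e2 e3 ⊢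
    simp only [Quaternion.re_mul, Quaternion.imI_mul,
      Quaternion.imJ_mul, Quaternion.imK_mul] at e1 e2 e3
    simp only [hI, hJ, hK] at e1 e2 e3
    obtain ⟨p1, p2, p3, p4⟩ := e1
    obtain ⟨q1, q2, q3, q4⟩ := e2
    obtain ⟨r1, r2, r3, r4⟩ := e3
    refine ⟨by linarith, by linarith, by linarith, by linarith⟩
  -- key identity on e
  have key2 : ∀ m, A e m * a⁻¹ = e m := by
    intro m
    by_cases hm : m = Fin.last n
    · subst hm
      rw [hlast, mul_inv_cancel₀ ha0]
      simp [he]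
    · rw [hzero m hm, zero_mul]
      simp [he, if_neg hm]
  intro v
  set c : ℍ[ℝ] := ((v (Fin.last n)).re : ℍ[ℝ]) with hc
  set w : Fin (n + 1) → ℍ[ℝ] := fun m => v m - e m * c with hw
  have hwre : (w (Fin.last n)).re = 0 := by
    simp [hw, he, hc]
  have hv : v = w + fun m => e m * c := by
    funext m; simp [hw]
  have hAv : ∀ m, A v m = A w m + A e m * c := by
    intro m
    rw [hv, map_add, hA e c]
    rfl
  funext m
  have hIdw := congrFun (hId w hwre) m
  have hcomm : c * a⁻¹ = a⁻¹ * c := by rw [hc]; exact Quaternion.coe_commutes _ _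
  calc A v m * a⁻¹ = (A w m + A e m * c) * a⁻¹ := by rw [hAv m]
    _ = A w m * a⁻¹ + A e m * (c * a⁻¹) := by rw [add_mul, mul_assoc]
    _ = w m + A e m * a⁻¹ * c := by rw [hIdw, hcomm, ← mul_assoc]
    _ = w m + e m * c := by rw [key2 m]
    _ = v m := by simp [hw]
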